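/- Let G₁ be a finite-index subgroup of a group G and let H ≤ G₁. If H is conjugacy distinguished in G₁, then H is conjugacy distinguished in G. -/

import Mathlib

/-- `H` is conjugacy distinguished within the subgroup `G₁` of the ambient group:
every element of `G₁` that is not `G₁`-conjugate into `H` fails to be `G₁`-conjugate
into some subgroup `D ≤ G₁` of finite index in `G₁` containing `H`. -/
def ConjDistWithin {G : Type*} [Group G] (G₁ H : Subgroup G) : Prop :=
  ∀ g ∈ G₁, (∀ x ∈ G₁, x⁻¹ * g * x ∉ H) →
    ∃ D : Subgroup G, D ≤ G₁ ∧ D.relIndex G₁ ≠ 0 ∧ H ≤ D ∧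
      ∀ x ∈ G₁, x⁻¹ * g * x ∉ D

/-- Being conjugacy distinguished passes from a finite index subgroup to the ambient
group. -/
theorem stmt_6 {G : Type*} [Group G] (G₁ H : Subgroup G)
    (hfin : G₁.index ≠ 0) (hH : H ≤ G₁)
    (hcd : ConjDistWithin G₁ H) :
    ∀ g : G, (∀ x : G, x⁻¹ * g * x ∉ H) →
      ∃ D : Subgroup G, D.index ≠ 0 ∧ H ≤ D ∧ ∀ x : G, x⁻¹ * g * x ∉ D := by
  classical
  intro g hg
  haveI : G₁.FiniteIndex := ⟨hfin⟩
  haveI : Finite (G ⧸ G₁) := G₁.finite_quotient_of_finiteIndex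
  have key : ∀ x : G, x⁻¹ * g * x ∈ G₁ →
      ∃ D : Subgroup G, D ≤ G₁ ∧ D.index ≠ 0 ∧ H ≤ D ∧
        ∀ y ∈ G₁, y⁻¹ * (x⁻¹ * g * x) * y ∉ D := by
    intro x hx
    obtain ⟨D, hDG, hrel, hHD, hD⟩ := hcd _ hx (fun y hy hmem => by
      refine hg (x * y) ?_
      have : (x * y)⁻¹ * g * (x * y) = y⁻¹ * (x⁻¹ * g * x) * y := by group
      rw [this]; exact hmem)
    refine ⟨D, hDG, ?_, hHD, hD⟩
    have := Subgroup.relIndex_mul_index hDG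
    rw [← this]
    exact mul_ne_zero hrel hfin
  let P : G ⧸ G₁ → Prop := fun q => ∃ x : G, (x : G ⧸ G₁) = q ∧ x⁻¹ * g * x ∈ G₁
  let f : G ⧸ G₁ → Subgroup G := fun q =>
    if h : P q then (key h.choose h.choose_spec.2).choose else G₁
  have hfle : ∀ q, f q ≤ G₁ := by
    intro q
    by_cases h : P q
    · simp only [f, dif_pos h]
      exact (key h.choose h.choose_spec.2).choose_spec.1
    · simp only [f, dif_neg h]
      exact le_rfl
  have hfidx : ∀ q, (f q).index ≠ 0 := by
    intro q
    by_cases h : P q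
    · simp only [f, dif_pos h]
      exact (key h.choose h.choose_spec.2).choose_spec.2.1
    · simpa only [f, dif_neg h] using hfin
  have hfH : ∀ q, H ≤ f q := by
    intro q
    by_cases h : P q
    · simp only [f, dif_pos h]
      exact (key h.choose h.choose_spec.2).choose_spec.2.2.1
    · simpa only [f, dif_neg h] using hH
  refine ⟨⨅ q, f q, Subgroup.index_iInf_ne_zero hfidx, le_iInf hfH, ?_⟩
  intro x hx
  have hxq : x⁻¹ * g * x ∈ f (x : G ⧸ G₁) := by
    exact (Subgroup.mem_iInf.mp hx) _
  have hxG₁ : x⁻¹ * g * x ∈ G₁ := hfle _ hxq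
  have hP : P (x : G ⧸ G₁) := ⟨x, rfl, hxG₁⟩
  have hfq : f (x : G ⧸ G₁) = (key hP.choose hP.choose_spec.2).choose := dif_pos hP
  rw [hfq] at hxq
  set x₀ := hP.choose with hx₀
  have hspec := (key hP.choose hP.choose_spec.2).choose_spec.2.2.2
  have hq : (x₀ : G ⧸ G₁) = (x : G ⧸ G₁) := hP.choose_spec.1
  have hh : x₀⁻¹ * x ∈ G₁ := QuotientGroup.eq.mp hq
  have heq : (x₀⁻¹ * x)⁻¹ * (x₀⁻¹ * g * x₀) * (x₀⁻¹ * x) = x⁻¹ * g * x := by group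
  exact hspec _ hh (heq.symm ▸ hxq)
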